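/- Let u : ℝ^n → [−1,1] be a Lipschitz continuous Q-minimizer of the energy E, let θ₀ ∈ (−1, −1/2] and θ ∈ [θ₀, 1), let x₀ be in the closure of ℝ^n_+, and suppose there exist c > 0 and r₀ ≥ 1 such that L^n(B_r^+(x₀) ∩ {u > θ₀}) ≥ c r^n for every r ≥ r₀. Then there exist c' > 0 and r₁ ≥ r₀, depending only on n, Q, p, θ₀, θ, c, r₀, the constant C₀ in the potential bounds, and the Lipschitz constant of u, such that L^n(B_r^+(x₀) ∩ {u > θ}) ≥ c' r^n for every r ≥ r₁. -/

import Mathlib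

open MeasureTheory Set Metric

/-- The open half-space `{x : xₙ > 0}` of `ℝⁿ` (last coordinate positive). -/
def upperHalfSpace (n : ℕ) (hn : 0 < n) : Set (EuclideanSpace ℝ (Fin n)) :=
  {x | 0 < x ⟨n - 1, Nat.sub_lt hn one_pos⟩}

/-- The hyperplane `{x : xₙ = 0}` of `ℝⁿ` (last coordinate zero). -/
def bottomHyperplane (n : ℕ) (hn : 0 < n) : Set (EuclideanSpace ℝ (Fin n)) :=
  {x | x ⟨n - 1, Nat.sub_lt hn one_pos⟩ = 0}

/-- The energy `E_Ω(u) = ∫_{Ω ∩ ℝⁿ₊} (|∇u|^p + F(u)) dx + ∫_{Ω ∩ {xₙ=0}} G(u) dH^{n-1}`. -/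
noncomputable def energyE (n : ℕ) (hn : 0 < n) (p : ℝ) (F G : ℝ → ℝ)
    (Ω : Set (EuclideanSpace ℝ (Fin n))) (u : EuclideanSpace ℝ (Fin n) → ℝ) : ℝ :=
  (∫ x in Ω ∩ upperHalfSpace n hn, (‖fderiv ℝ u x‖ ^ p + F (u x))) +
  (∫ x in Ω ∩ bottomHyperplane n hn, G (u x) ∂(μH[(n - 1 : ℕ)]))

/-- `u` is a `Q`-minimizer of the energy: for every bounded open `Ω` and every Lipschitz
perturbation `φ` supported in `Ω` with `u + φ` taking values in `[-1,1]`,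
`E_Ω(u) ≤ Q · E_Ω(u + φ)`. -/
def IsQMinimizer (n : ℕ) (hn : 0 < n) (p Q : ℝ) (F G : ℝ → ℝ)
    (u : EuclideanSpace ℝ (Fin n) → ℝ) : Prop :=
  ∀ Ω : Set (EuclideanSpace ℝ (Fin n)), IsOpen Ω → Bornology.IsBounded Ω →
    ∀ φ : EuclideanSpace ℝ (Fin n) → ℝ, (∃ K, LipschitzWith K φ) →
      Function.support φ ⊆ Ω → (∀ x, u x + φ x ∈ Icc (-1 : ℝ) 1) →
      energyE n hn p F G Ω u ≤ Q * energyE n hn p F G Ω (fun x => u x + φ x)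

/-- The double-well potential bounds: `max(F τ, G τ) ≤ C₀ (1-τ²)^p` and
`F τ ≥ (1-τ²)^p / C₀` for `τ ∈ [-1,1]`. -/
def PotentialBounds (p C₀ : ℝ) (F G : ℝ → ℝ) : Prop :=
  ∀ τ ∈ Icc (-1 : ℝ) 1,
    max (F τ) (G τ) ≤ C₀ * (1 - τ ^ 2) ^ p ∧ (1 - τ ^ 2) ^ p / C₀ ≤ F τ

open scoped NNReal ENNReal

/- ### Auxiliary lemmas -/

lemma myPowDiff {a b : ℝ} (hb : 0 ≤ b) (hab : b ≤ a) :
    ∀ k : ℕ, a ^ (k+1) - b ^ (k+1) ≤ (a - b) * (k+1) * a ^ k := by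
  intro k
  induction k with
  | zero => simp
  | succ k ih =>
    have ha : (0:ℝ) ≤ a := hb.trans hab
    have h1 : b ^ (k+1) ≤ a ^ (k+1) := pow_le_pow_left₀ hb hab _
    calc a ^ (k+1+1) - b ^ (k+1+1)
        = a * (a ^ (k+1) - b ^ (k+1)) + (a - b) * b ^ (k+1) := by ring
      _ ≤ a * ((a - b) * (k+1) * a ^ k) + (a - b) * a ^ (k+1) :=
          add_le_add (mul_le_mul_of_nonneg_left ih ha)
            (mul_le_mul_of_nonneg_left h1 (sub_nonneg.2 hab))
      _ = (a - b) * (↑(k+1) + 1) * a ^ (k+1) := by push_cast; ring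

lemma myLipMul {α : Type*} [PseudoMetricSpace α] {f g : α → ℝ} {Kf Kg A B : ℝ≥0}
    (hf : LipschitzWith Kf f) (hg : LipschitzWith Kg g)
    (hA : ∀ x, |f x| ≤ A) (hB : ∀ x, |g x| ≤ B) :
    LipschitzWith (A * Kg + B * Kf) (fun x => f x * g x) := by
  apply LipschitzWith.of_dist_le_mul
  intro x y
  have h1 := hf.dist_le_mul x y
  have h2 := hg.dist_le_mul x y
  simp only [Real.dist_eq] at h1 h2 ⊢
  push_cast
  have e : f x * g x - f y * g y = f x * (g x - g y) + (f x - f y) * g y := by ring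
  calc |f x * g x - f y * g y| = |f x * (g x - g y) + (f x - f y) * g y| := by rw [e]
    _ ≤ |f x * (g x - g y)| + |(f x - f y) * g y| := abs_add_le _ _
    _ = |f x| * |g x - g y| + |f x - f y| * |g y| := by rw [abs_mul, abs_mul]
    _ ≤ (A:ℝ) * ((Kg:ℝ) * dist x y) + ((Kf:ℝ) * dist x y) * (B:ℝ) := by
        exact add_le_add
          (mul_le_mul (hA x) h2 (abs_nonneg _) A.coe_nonneg)
          (mul_le_mul h1 (hB y) (abs_nonneg _) (by positivity))
    _ = ((A:ℝ) * (Kg:ℝ) + (B:ℝ) * (Kf:ℝ)) * dist x y := by ring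

lemma myAddConst {α : Type*} [PseudoMetricSpace α] {f : α → ℝ} {Kf : ℝ≥0}
    (hf : LipschitzWith Kf f) (a : ℝ) : LipschitzWith Kf (fun x => f x + a) := by
  apply LipschitzWith.of_dist_le_mul
  intro x y
  simpa [Real.dist_eq, add_sub_add_right_eq_sub] using hf.dist_le_mul x y

lemma mySubConst {α : Type*} [PseudoMetricSpace α] {f : α → ℝ} {Kf : ℝ≥0}
    (hf : LipschitzWith Kf f) (a : ℝ) : LipschitzWith Kf (fun x => f x - a) := by
  apply LipschitzWith.of_dist_le_mul
  intro x y
  simpa [Real.dist_eq, sub_sub_sub_cancel_right] using hf.dist_le_mul x y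

lemma coordDistLe {n : ℕ} (x y : EuclideanSpace ℝ (Fin n)) (i : Fin n) :
    dist (x i) (y i) ≤ dist x y := by
  rw [EuclideanSpace.dist_eq]
  have h1 : dist (x i) (y i) = Real.sqrt (dist (x i) (y i) ^ 2) :=
    (Real.sqrt_sq dist_nonneg).symm
  rw [h1]
  apply Real.sqrt_le_sqrt
  exact Finset.single_le_sum (f := fun j => dist (x j) (y j) ^ 2)
    (fun j _ => sq_nonneg _) (Finset.mem_univ i)

lemma sliceBound (n : ℕ) (hn : 2 ≤ n) :
    ∃ Cs : ℝ, 0 ≤ Cs ∧ ∀ (x₀ : EuclideanSpace ℝ (Fin n)) (R : ℝ), 0 ≤ R →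
      μH[(n - 1 : ℕ)] (ball x₀ R ∩ bottomHyperplane n (Nat.zero_lt_of_lt hn)) ≤
        ENNReal.ofReal (Cs * R ^ (n-1)) := by
  have hn0 : 0 < n := by omega
  set d : ℕ := n - 1 with hd
  have hd1 : 1 ≤ d := by omega
  haveI : Inhabited (Fin d) := ⟨⟨0, by omega⟩⟩
  haveI : Nontrivial (Fin d → ℝ) := Pi.nontrivial
  set g : (Fin d → ℝ) → EuclideanSpace ℝ (Fin n) :=
    fun y => WithLp.toLp 2 (fun i => if h : (i : ℕ) < d then y ⟨i, h⟩ else 0) with hg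
  have hglip : LipschitzWith (Real.toNNReal (Real.sqrt n)) g := by
    apply LipschitzWith.of_dist_le_mul
    intro y z
    rw [EuclideanSpace.dist_eq]
    have hcoord : ∀ i : Fin n, dist (g y i) (g z i) ^ 2 ≤ dist y z ^ 2 := by
      intro i
      by_cases h : (i : ℕ) < d
      · simp only [hg, PiLp.toLp_apply, dif_pos h]
        have := dist_le_pi_dist y z ⟨(i : ℕ), h⟩
        have h0 : (0:ℝ) ≤ dist (y ⟨(i:ℕ), h⟩) (z ⟨(i:ℕ), h⟩) := dist_nonneg
        nlinarith [dist_nonneg (x := y) (y := z)]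
      · simp only [hg, PiLp.toLp_apply, dif_neg h, dist_self]
        nlinarith [sq_nonneg (dist y z)]
    have hsum : (∑ i, dist (g y i) (g z i) ^ 2) ≤ (n : ℝ) * dist y z ^ 2 := by
      calc (∑ i, dist (g y i) (g z i) ^ 2) ≤ ∑ _i : Fin n, dist y z ^ 2 :=
            Finset.sum_le_sum (fun i _ => hcoord i)
        _ = (n : ℝ) * dist y z ^ 2 := by simp [Finset.sum_const, Finset.card_univ, mul_comm]
    calc Real.sqrt (∑ i, dist (g y i) (g z i) ^ 2)
        ≤ Real.sqrt ((n : ℝ) * dist y z ^ 2) := Real.sqrt_le_sqrt hsum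
      _ = Real.sqrt n * dist y z := by
          rw [Real.sqrt_mul (by positivity), Real.sqrt_sq dist_nonneg]
      _ = (Real.toNNReal (Real.sqrt n) : ℝ) * dist y z := by
          rw [Real.coe_toNNReal _ (Real.sqrt_nonneg _)]
  set Vd : ℝ≥0∞ := volume (ball (0 : Fin d → ℝ) 1) with hVd
  have hVdfin : Vd ≠ ⊤ := measure_ball_lt_top.ne
  refine ⟨Real.sqrt n ^ d * Vd.toReal, by positivity, ?_⟩
  intro x₀ R hR
  have hsub : ball x₀ R ∩ bottomHyperplane n hn0 ⊆
      g '' (closedBall (fun j : Fin d => x₀ ⟨(j : ℕ), by omega⟩) R) := by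
    rintro x ⟨hx1, hx2⟩
    refine ⟨fun j => x ⟨(j : ℕ), by omega⟩, ?_, ?_⟩
    · rw [mem_closedBall, dist_pi_le_iff hR]
      intro j
      exact (coordDistLe x x₀ _).trans (mem_ball.mp hx1).le
    · ext i
      by_cases h : (i : ℕ) < d
      · simp only [hg, PiLp.toLp_apply, dif_pos h]
      · simp only [hg, PiLp.toLp_apply, dif_neg h]
        have hi : (i : ℕ) = n - 1 := by omega
        have : i = ⟨n - 1, Nat.sub_lt hn0 one_pos⟩ := Fin.ext hi
        rw [this]
        exact (hx2).symm
  calc μH[(d : ℕ)] (ball x₀ R ∩ bottomHyperplane n hn0)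
      ≤ μH[(d : ℕ)] (g '' (closedBall (fun j : Fin d => x₀ ⟨(j : ℕ), by omega⟩) R)) :=
        measure_mono hsub
    _ ≤ (Real.toNNReal (Real.sqrt n) : ℝ≥0∞) ^ (d : ℝ) *
        μH[(d : ℕ)] (closedBall (fun j : Fin d => x₀ ⟨(j : ℕ), by omega⟩) R) :=
        hglip.hausdorffMeasure_image_le (by positivity) _
    _ = (Real.toNNReal (Real.sqrt n) : ℝ≥0∞) ^ (d : ℝ) *
        volume (closedBall (fun j : Fin d => x₀ ⟨(j : ℕ), by omega⟩) R) := by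
        congr 1
        have : ((d : ℕ) : ℝ) = (Fintype.card (Fin d) : ℝ) := by simp
        rw [this, hausdorffMeasure_pi_real]
    _ = (Real.toNNReal (Real.sqrt n) : ℝ≥0∞) ^ (d : ℝ) * (ENNReal.ofReal (R ^ d) * Vd) := by
        rw [Measure.addHaar_closedBall volume _ hR]
        congr 2
        simp [Module.finrank_fintype_fun_eq_card]
    _ ≤ ENNReal.ofReal (Real.sqrt n ^ d * Vd.toReal * R ^ d) := by
        have h1 : (Real.toNNReal (Real.sqrt n) : ℝ≥0∞) ^ (d : ℝ) =
            ENNReal.ofReal (Real.sqrt n ^ d) := by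
          rw [ENNReal.rpow_natCast]
          show (ENNReal.ofReal (Real.sqrt n)) ^ d = _
          rw [← ENNReal.ofReal_pow (Real.sqrt_nonneg _)]
        rw [h1, ← ENNReal.ofReal_toReal hVdfin,
          ← ENNReal.ofReal_mul (pow_nonneg hR d),
          ← ENNReal.ofReal_mul (pow_nonneg (Real.sqrt_nonneg _) d)]
        apply ENNReal.ofReal_le_ofReal
        rw [ENNReal.toReal_ofReal ENNReal.toReal_nonneg]
        nlinarith [pow_nonneg (Real.sqrt_nonneg (n:ℝ)) d,
          ENNReal.toReal_nonneg (a := Vd), pow_nonneg hR d]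

lemma annulusBound (n : ℕ) (hn : 2 ≤ n) :
    ∃ Ca : ℝ, 0 ≤ Ca ∧ ∀ (x₀ : EuclideanSpace ℝ (Fin n)) (r : ℝ), 1 ≤ r →
      volume (ball x₀ (r+2) \ ball x₀ r) ≤ ENNReal.ofReal (Ca * r ^ (n-1)) := by
  set V : ℝ≥0∞ := volume (ball (0 : EuclideanSpace ℝ (Fin n)) 1) with hV
  have hVfin : V ≠ ⊤ := measure_ball_lt_top.ne
  refine ⟨2 * n * 3 ^ (n-1) * V.toReal, by positivity, ?_⟩
  intro x₀ r hr
  haveI : Inhabited (Fin n) := ⟨⟨0, by omega⟩⟩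
  haveI : Nontrivial (EuclideanSpace ℝ (Fin n)) := inferInstance
  have hr0 : (0:ℝ) ≤ r := by linarith
  have hfr : Module.finrank ℝ (EuclideanSpace ℝ (Fin n)) = n := finrank_euclideanSpace_fin
  have hb1 : volume (ball x₀ (r+2)) = ENNReal.ofReal ((r+2)^n) * V := by
    rw [Measure.addHaar_ball volume x₀ (by linarith : (0:ℝ) ≤ r + 2), hfr]
  have hb2 : volume (ball x₀ r) = ENNReal.ofReal (r^n) * V := by
    rw [Measure.addHaar_ball volume x₀ hr0, hfr]
  have hdiff : volume (ball x₀ (r+2) \ ball x₀ r) =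
      ENNReal.ofReal ((r+2)^n) * V - ENNReal.ofReal (r^n) * V := by
    rw [measure_diff (ball_subset_ball (by linarith)) measurableSet_ball.nullMeasurableSet
      measure_ball_lt_top.ne, hb1, hb2]
  rw [hdiff, tsub_le_iff_right]
  have hreal : (r+2)^n ≤ 2 * n * 3 ^ (n-1) * r^(n-1) + r^n := by
    have hnn : n - 1 + 1 = n := by omega
    have h1 := myPowDiff hr0 (by linarith : r ≤ r + 2) (n-1)
    rw [hnn] at h1
    have h2 : (r+2)^(n-1) ≤ 3^(n-1) * r^(n-1) := by
      calc (r+2)^(n-1) ≤ (3*r)^(n-1) := pow_le_pow_left₀ (by linarith) (by linarith) _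
        _ = 3^(n-1) * r^(n-1) := mul_pow 3 r (n-1)
    have h3 : ((n - 1 : ℕ) : ℝ) + 1 = (n : ℝ) := by
      have : ((n - 1 + 1 : ℕ) : ℝ) = (n : ℝ) := by rw [hnn]
      push_cast at this ⊢
      linarith
    rw [h3] at h1
    nlinarith [pow_nonneg hr0 (n-1), (by exact_mod_cast Nat.zero_lt_of_lt hn : (0:ℝ) < n)]
  calc ENNReal.ofReal ((r+2)^n) * V
      ≤ ENNReal.ofReal (2 * n * 3 ^ (n-1) * r^(n-1) + r^n) * V := by
        exact mul_le_mul_left (ENNReal.ofReal_le_ofReal hreal) V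
    _ = ENNReal.ofReal (2 * n * 3 ^ (n-1) * r^(n-1)) * V + ENNReal.ofReal (r^n) * V := by
        rw [ENNReal.ofReal_add (by positivity) (by positivity), add_mul]
    _ ≤ ENNReal.ofReal (2 * n * 3 ^ (n-1) * V.toReal * r^(n-1)) + ENNReal.ofReal (r^n) * V := by
        gcongr
        conv_lhs => rw [← ENNReal.ofReal_toReal hVfin]
        rw [← ENNReal.ofReal_mul (by positivity)]
        exact ENNReal.ofReal_le_ofReal (le_of_eq (by ring))


set_option maxHeartbeats 2000000 in
/-- Upgrading the density estimate from a level `θ₀ ∈ (-1,-1/2]` to any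
level `θ ∈ [θ₀,1)`: if `u` is a Lipschitz continuous `Q`-minimizer and
`Lⁿ(B⁺_r(x₀) ∩ {u > θ₀}) ≥ c rⁿ` for all `r ≥ r₀`, then there are `c' > 0` and `r₁ ≥ r₀`,
depending only on `n, Q, p, θ₀, θ, c, r₀, C₀` and the Lipschitz constant of `u`, with
`Lⁿ(B⁺_r(x₀) ∩ {u > θ}) ≥ c' rⁿ` for all `r ≥ r₁`. -/
theorem statement13 (n : ℕ) (hn : 2 ≤ n) (p : ℝ) (hp : 1 < p) (Q : ℝ) (hQ : 1 ≤ Q)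
    (C₀ : ℝ) (hC₀ : 1 ≤ C₀) (L : NNReal) (θ₀ θ c r₀ : ℝ)
    (hθ₀ : θ₀ ∈ Ioc (-1 : ℝ) (-1/2)) (hθ : θ ∈ Ico θ₀ (1 : ℝ))
    (hc : 0 < c) (hr₀ : 1 ≤ r₀) :
    ∃ c' r₁ : ℝ, 0 < c' ∧ r₀ ≤ r₁ ∧
      ∀ F G : ℝ → ℝ, Continuous F → Continuous G →
        (∀ τ, 0 ≤ F τ) → (∀ τ, 0 ≤ G τ) → PotentialBounds p C₀ F G →
        ∀ u : EuclideanSpace ℝ (Fin n) → ℝ, LipschitzWith L u →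
          (∀ x, u x ∈ Icc (-1 : ℝ) 1) →
          IsQMinimizer n (by omega) p Q F G u →
          ∀ x₀ ∈ closure (upperHalfSpace n (by omega)),
            (∀ r : ℝ, r₀ ≤ r →
              ENNReal.ofReal (c * r ^ n) ≤
                volume (ball x₀ r ∩ upperHalfSpace n (by omega) ∩ {x | θ₀ < u x})) →
            ∀ r : ℝ, r₁ ≤ r →
              ENNReal.ofReal (c' * r ^ n) ≤
                volume (ball x₀ r ∩ upperHalfSpace n (by omega) ∩ {x | θ < u x}) := by
  have hn0 : 0 < n := by omega
  have hp0 : (0:ℝ) < p := by linarith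
  have hC₀0 : (0:ℝ) < C₀ := by linarith
  obtain ⟨Cs, hCs0, hCs⟩ := sliceBound n hn
  obtain ⟨Ca, hCa0, hCa⟩ := annulusBound n hn
  -- Lipschitz constant of the comparison function
  set Kv : ℝ≥0 := L + (1 * L + 2 * 1) with hKv
  set M : ℝ := ((Kv : ℝ)) ^ p + C₀ with hM
  have hM0 : 0 ≤ M :=
    add_nonneg (Real.rpow_nonneg Kv.coe_nonneg p) hC₀0.le
  -- the positive lower bound for F on (θ₀, θ]
  have hmax1 : max (θ₀^2) (θ^2) < 1 := by
    have h1 : θ₀^2 < 1 := by nlinarith [hθ₀.1, hθ₀.2]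
    have h2 : θ^2 < 1 := by nlinarith [hθ.1, hθ.2, hθ₀.1]
    exact max_lt h1 h2
  have hmax0 : 0 ≤ max (θ₀^2) (θ^2) := le_max_of_le_left (sq_nonneg _)
  set δ : ℝ := (1 - max (θ₀^2) (θ^2)) ^ p / C₀ with hδdef
  have hδ : 0 < δ := div_pos (Real.rpow_pos_of_pos (by linarith) p) hC₀0
  set B₀ : ℝ := M * Ca + C₀ * Cs * 3^(n-1) with hB₀
  have hB₀0 : 0 ≤ B₀ := by positivity
  set K : ℝ := Q * B₀ / δ with hK
  have hK0 : 0 ≤ K := by positivity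
  refine ⟨c/2, max r₀ (2*K/c + 1), by positivity, le_max_left _ _, ?_⟩
  intro F G hFc hGc hF0 hG0 hpb u hLu hurange hmin x₀ _hx₀ hdens r hr
  have hr₀r : r₀ ≤ r := (le_max_left _ _).trans hr
  have hr1 : (1:ℝ) ≤ r := hr₀.trans hr₀r
  have hr0' : (0:ℝ) < r := by linarith
  have hrK : 2*K/c + 1 ≤ r := (le_max_right _ _).trans hr
  have hu_cont : Continuous u := hLu.continuous
  -- basic potential facts
  have h_one_sub_sq : ∀ t : ℝ, t ∈ Icc (-1:ℝ) 1 → (1 - t^2) ^ p ≤ 1 := by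
    intro t ht
    apply Real.rpow_le_one (by nlinarith [ht.1, ht.2]) (by nlinarith [ht.1, ht.2]) hp0.le
  have hFle : ∀ t : ℝ, t ∈ Icc (-1:ℝ) 1 → F t ≤ C₀ := by
    intro t ht
    calc F t ≤ max (F t) (G t) := le_max_left _ _
      _ ≤ C₀ * (1 - t^2) ^ p := (hpb t ht).1
      _ ≤ C₀ * 1 := by
          exact mul_le_mul_of_nonneg_left (h_one_sub_sq t ht) hC₀0.le
      _ = C₀ := mul_one _
  have hGle : ∀ t : ℝ, t ∈ Icc (-1:ℝ) 1 → G t ≤ C₀ := by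
    intro t ht
    calc G t ≤ max (F t) (G t) := le_max_right _ _
      _ ≤ C₀ * (1 - t^2) ^ p := (hpb t ht).1
      _ ≤ C₀ * 1 := mul_le_mul_of_nonneg_left (h_one_sub_sq t ht) hC₀0.le
      _ = C₀ := mul_one _
  have hFneg1 : F (-1) = 0 := by
    have h := (hpb (-1) ⟨le_refl _, by norm_num⟩).1
    have h2 : (1 - (-1:ℝ)^2) ^ p = 0 := by
      norm_num
      exact Real.zero_rpow (by linarith)
    rw [h2, mul_zero] at h
    exact le_antisymm ((le_max_left _ _).trans h) (hF0 _)
  -- the cutoff and comparison functions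
  set η : EuclideanSpace ℝ (Fin n) → ℝ := fun x => min 1 (max (dist x x₀ - r) 0) with hη
  have hη01 : ∀ x, 0 ≤ η x ∧ η x ≤ 1 := by
    intro x
    constructor
    · exact le_min one_pos.le (le_max_right _ _)
    · exact min_le_left _ _
  have hηlip : LipschitzWith 1 η := by
    have h1 : LipschitzWith 1 (fun x : EuclideanSpace ℝ (Fin n) => dist x x₀) :=
      LipschitzWith.dist_left x₀
    have h2 := (mySubConst h1 r).max_const 0
    have h3 := h2.const_min 1
    simpa using h3
  set φ : EuclideanSpace ℝ (Fin n) → ℝ := fun x => (η x - 1) * (u x + 1) with hφ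
  have hφlip : LipschitzWith (1 * L + 2 * 1) φ := by
    apply myLipMul (mySubConst hηlip 1) (myAddConst hLu 1)
    · intro x
      have := hη01 x
      rw [abs_le]
      constructor <;> simp <;> linarith [this.1, this.2]
    · intro x
      have := hurange x
      rw [abs_le]
      constructor <;> simp <;> linarith [this.1, this.2]
  set v : EuclideanSpace ℝ (Fin n) → ℝ := fun x => u x + φ x with hv
  have hvlip : LipschitzWith Kv v := hLu.add hφlip
  have hv_cont : Continuous v := hvlip.continuous
  have hv_eq : ∀ x, v x = (η x) * (u x + 1) - 1 := by
    intro x; simp only [hv, hφ]; ring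
  have hv_range : ∀ x, v x ∈ Icc (-1:ℝ) 1 := by
    intro x
    have h1 := hη01 x
    have h2 := hurange x
    rw [hv_eq x]
    constructor
    · have : 0 ≤ η x * (u x + 1) := mul_nonneg h1.1 (by linarith [h2.1])
      simp only [mem_Icc] at *
      linarith
    · have : η x * (u x + 1) ≤ 1 * (u x + 1) :=
        mul_le_mul_of_nonneg_right h1.2 (by linarith [h2.1])
      simp only [mem_Icc] at *
      nlinarith [h2.1, h2.2]
  have hv_ball : ∀ x ∈ ball x₀ r, v x = -1 := by
    intro x hx
    have hd : dist x x₀ - r < 0 := by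
      rw [mem_ball] at hx; linarith
    have hη0 : η x = 0 := by
      rw [hη]
      simp only
      rw [max_eq_right hd.le, min_eq_right one_pos.le]
    rw [hv_eq x, hη0, zero_mul, zero_sub]
  have hsupp : Function.support φ ⊆ ball x₀ (r+2) := by
    intro x hx
    rw [Function.mem_support] at hx
    by_contra hxB
    apply hx
    have hd : r + 2 ≤ dist x x₀ := by
      rw [mem_ball] at hxB; linarith [not_lt.mp hxB]
    have hη1 : η x = 1 := by
      rw [hη]
      simp only
      rw [max_eq_left (by linarith), min_eq_left (by linarith)]
    rw [hφ]
    simp only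
    rw [hη1, sub_self, zero_mul]
  -- the sets
  set Ω : Set (EuclideanSpace ℝ (Fin n)) := ball x₀ (r+2) with hΩ
  set A : Set (EuclideanSpace ℝ (Fin n)) := Ω ∩ upperHalfSpace n hn0 with hA
  set S : Set (EuclideanSpace ℝ (Fin n)) :=
    A ∩ ({x | θ₀ < u x} ∩ {x | u x ≤ θ}) with hS
  have hhalf_open : IsOpen (upperHalfSpace n hn0) :=
    isOpen_lt continuous_const
      (PiLp.continuous_apply 2 _ _ : Continuous fun x : EuclideanSpace ℝ (Fin n) =>
        x ⟨n-1, Nat.sub_lt hn0 one_pos⟩)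
  have hhyp_closed : IsClosed (bottomHyperplane n hn0) :=
    isClosed_eq
      (PiLp.continuous_apply 2 _ _ : Continuous fun x : EuclideanSpace ℝ (Fin n) =>
        x ⟨n-1, Nat.sub_lt hn0 one_pos⟩) continuous_const
  have hA_meas : MeasurableSet A := measurableSet_ball.inter hhalf_open.measurableSet
  have hS_meas : MeasurableSet S :=
    hA_meas.inter (((isOpen_lt continuous_const hu_cont).measurableSet).inter
      ((isClosed_le hu_cont continuous_const).measurableSet))
  have hAfin : volume A ≠ ⊤ :=
    ((measure_mono inter_subset_left).trans_lt measure_ball_lt_top).ne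
  -- integrands
  set gu : EuclideanSpace ℝ (Fin n) → ℝ := fun x => ‖fderiv ℝ u x‖ ^ p + F (u x) with hgu
  set gv : EuclideanSpace ℝ (Fin n) → ℝ := fun x => ‖fderiv ℝ v x‖ ^ p + F (v x) with hgv
  have meas_gu : Measurable gu :=
    ((measurable_fderiv ℝ u).norm.pow measurable_const).add (hFc.comp hu_cont).measurable
  have meas_gv : Measurable gv :=
    ((measurable_fderiv ℝ v).norm.pow measurable_const).add (hFc.comp hv_cont).measurable
  have hgu_nonneg : ∀ x, 0 ≤ gu x := fun x =>
    add_nonneg (Real.rpow_nonneg (norm_nonneg _) p) (hF0 _)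
  have hgv_nonneg : ∀ x, 0 ≤ gv x := fun x =>
    add_nonneg (Real.rpow_nonneg (norm_nonneg _) p) (hF0 _)
  have hLKv : (L : ℝ) ≤ (Kv : ℝ) := by
    rw [hKv]; push_cast; linarith [L.coe_nonneg]
  have hgu_le : ∀ x, gu x ≤ M := by
    intro x
    rw [hgu, hM]
    apply add_le_add _ (hFle _ (hurange x))
    apply Real.rpow_le_rpow (norm_nonneg _) _ hp0.le
    exact (norm_fderiv_le_of_lipschitz ℝ hLu).trans hLKv
  have hgv_le : ∀ x, gv x ≤ M := by
    intro x
    rw [hgv, hM]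
    apply add_le_add _ (hFle _ (hv_range x))
    apply Real.rpow_le_rpow (norm_nonneg _) _ hp0.le
    exact norm_fderiv_le_of_lipschitz ℝ hvlip
  have hgu_int : IntegrableOn gu A := by
    apply Measure.integrableOn_of_bounded hAfin meas_gu.aestronglyMeasurable
    apply ae_of_all
    intro x
    rw [Real.norm_eq_abs, abs_of_nonneg (hgu_nonneg x)]
    exact hgu_le x
  have hgv_int : IntegrableOn gv A := by
    apply Measure.integrableOn_of_bounded hAfin meas_gv.aestronglyMeasurable
    apply ae_of_all
    intro x
    rw [Real.norm_eq_abs, abs_of_nonneg (hgv_nonneg x)]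
    exact hgv_le x
  have hFu_int : IntegrableOn (fun x => F (u x)) A := by
    apply Measure.integrableOn_of_bounded hAfin (hFc.comp hu_cont).measurable.aestronglyMeasurable
    apply ae_of_all
    intro x
    have hx : |F (u x)| ≤ C₀ := by
      rw [abs_of_nonneg (hF0 _)]; exact hFle _ (hurange x)
    simpa [Real.norm_eq_abs] using hx
  -- lower bound for the energy of u
  have hδF : ∀ x ∈ S, δ ≤ F (u x) := by
    intro x hx
    obtain ⟨-, hx1, hx2⟩ := hx
    have hsq : u x ^ 2 ≤ max (θ₀^2) (θ^2) := by
      rcases le_total 0 (u x) with h | h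
      · refine le_trans ?_ (le_max_right _ _)
        have hθ0' : 0 ≤ θ := le_trans h hx2
        nlinarith [mul_nonneg (sub_nonneg.2 hx2) (by linarith : 0 ≤ θ + u x)]
      · refine le_trans ?_ (le_max_left _ _)
        have hx1' : θ₀ < u x := hx1
        nlinarith [mul_nonneg (by linarith : (0:ℝ) ≤ u x - θ₀)
          (by linarith [hθ₀.2] : (0:ℝ) ≤ -(u x + θ₀))]
    have hur := hurange x
    calc δ = (1 - max (θ₀^2) (θ^2)) ^ p / C₀ := rfl
      _ ≤ (1 - u x ^ 2) ^ p / C₀ := by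
          have hle : (1 - max (θ₀^2) (θ^2)) ^ p ≤ (1 - u x ^ 2) ^ p :=
            Real.rpow_le_rpow (by linarith) (by linarith [hsq]) hp0.le
          gcongr
      _ ≤ F (u x) := (hpb (u x) hur).2
  have hstep1 : δ * (volume S).toReal ≤ ∫ x in S, F (u x) := by
    have h1 : ∫ _x in S, δ ≤ ∫ x in S, F (u x) := by
      apply setIntegral_mono_on (integrableOn_const (LT.lt.ne ?_)) (hFu_int.mono_set ?_) hS_meas hδF
      · exact ((measure_mono (inter_subset_left.trans inter_subset_left)).trans_lt
          measure_ball_lt_top)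
      · exact inter_subset_left
    rw [setIntegral_const, smul_eq_mul, mul_comm] at h1
    exact h1
  have hstep2 : ∫ x in S, F (u x) ≤ ∫ x in A, F (u x) := by
    apply setIntegral_mono_set hFu_int (ae_of_all _ (fun x => hF0 _))
    exact HasSubset.Subset.eventuallyLE inter_subset_left
  have hstep3 : ∫ x in A, F (u x) ≤ ∫ x in A, gu x := by
    apply setIntegral_mono_on hFu_int hgu_int hA_meas
    intro x _
    exact le_add_of_nonneg_left (Real.rpow_nonneg (norm_nonneg _) p)
  have hstep4 : ∫ x in A, gu x ≤ energyE n hn0 p F G Ω u := by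
    have hbd : 0 ≤ ∫ x in Ω ∩ bottomHyperplane n hn0, G (u x) ∂(μH[(n - 1 : ℕ)]) :=
      integral_nonneg (fun x => hG0 _)
    rw [energyE]
    exact le_add_of_nonneg_right hbd
  -- minimality
  have hE := hmin Ω isOpen_ball isBounded_ball φ ⟨_, hφlip⟩ hsupp hv_range
  -- upper bound for the energy of v : the gradient part
  have hterm1 : ∫ x in A, gv x ≤ M * (Ca * r^(n-1)) := by
    set ψ : EuclideanSpace ℝ (Fin n) → ℝ := (ball x₀ r)ᶜ.indicator (fun _ => M) with hψ
    have hψ_meas : Measurable ψ := measurable_const.indicator measurableSet_ball.compl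
    have hψ_int : IntegrableOn ψ A := by
      apply Measure.integrableOn_of_bounded hAfin hψ_meas.aestronglyMeasurable (M := M)
      apply ae_of_all
      intro x
      rw [Real.norm_eq_abs]
      by_cases hx : x ∈ (ball x₀ r)ᶜ
      · rw [hψ, indicator_of_mem hx, abs_of_nonneg hM0]
      · rw [hψ, indicator_of_notMem hx, abs_zero]; exact hM0
    have hpt : ∀ x ∈ A, gv x ≤ ψ x := by
      intro x _
      by_cases hx : x ∈ ball x₀ r
      · have h0 : ψ x = 0 := indicator_of_notMem (by simpa using hx) _
        have hev : v =ᶠ[nhds x] (fun _ => (-1:ℝ)) :=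
          Filter.eventuallyEq_of_mem (isOpen_ball.mem_nhds hx) hv_ball
        have hfd : fderiv ℝ v x = 0 := by
          rw [hev.fderiv_eq]
          exact fderiv_const_apply _
        have : gv x = 0 := by
          rw [hgv]
          simp only
          rw [hfd, hv_ball x hx, hFneg1, norm_zero, Real.zero_rpow (by linarith), add_zero]
        rw [this, h0]
      · rw [hψ, indicator_of_mem (by simpa using hx)]
        exact hgv_le x
    calc ∫ x in A, gv x ≤ ∫ x in A, ψ x := setIntegral_mono_on hgv_int hψ_int hA_meas hpt
      _ = ∫ _x in A ∩ (ball x₀ r)ᶜ, M := setIntegral_indicator measurableSet_ball.compl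
      _ = (volume (A ∩ (ball x₀ r)ᶜ)).toReal * M := by rw [setIntegral_const, smul_eq_mul, Measure.real]
      _ ≤ (Ca * r^(n-1)) * M := by
          apply mul_le_mul_of_nonneg_right _ hM0
          apply ENNReal.toReal_le_of_le_ofReal (by positivity)
          refine le_trans (measure_mono ?_) (hCa x₀ r hr1)
          rintro x ⟨⟨hx1, -⟩, hx2⟩
          exact ⟨hx1, by simpa using hx2⟩
      _ = M * (Ca * r^(n-1)) := mul_comm _ _
  -- upper bound for the energy of v : the boundary part
  have hterm2 : ∫ x in Ω ∩ bottomHyperplane n hn0, G (v x) ∂(μH[(n - 1 : ℕ)]) ≤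
      C₀ * Cs * 3^(n-1) * r^(n-1) := by
    have hs2 := hCs x₀ (r+2) (by linarith)
    have hs2fin : μH[(n - 1 : ℕ)] (Ω ∩ bottomHyperplane n hn0) ≠ ⊤ :=
      (lt_of_le_of_lt hs2 ENNReal.ofReal_lt_top).ne
    have hs2meas : MeasurableSet (Ω ∩ bottomHyperplane n hn0) :=
      measurableSet_ball.inter hhyp_closed.measurableSet
    have hGint : IntegrableOn (fun x => G (v x)) (Ω ∩ bottomHyperplane n hn0) μH[(n - 1 : ℕ)] := by
      apply Measure.integrableOn_of_bounded hs2fin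
        (hGc.comp hv_cont).measurable.aestronglyMeasurable (M := C₀)
      apply ae_of_all
      intro x
      have hx : |G (v x)| ≤ C₀ := by
        rw [abs_of_nonneg (hG0 _)]; exact hGle _ (hv_range x)
      simpa [Real.norm_eq_abs] using hx
    calc ∫ x in Ω ∩ bottomHyperplane n hn0, G (v x) ∂(μH[(n - 1 : ℕ)])
        ≤ ∫ _x in Ω ∩ bottomHyperplane n hn0, C₀ ∂(μH[(n - 1 : ℕ)]) := by
          apply setIntegral_mono_on hGint
            (integrableOn_const hs2fin) hs2meas
          intro x _
          exact hGle _ (hv_range x)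
      _ = (μH[(n - 1 : ℕ)] (Ω ∩ bottomHyperplane n hn0)).toReal * C₀ := by
          rw [setIntegral_const, smul_eq_mul, Measure.real]
      _ ≤ (Cs * (r+2)^(n-1)) * C₀ := by
          apply mul_le_mul_of_nonneg_right _ hC₀0.le
          apply ENNReal.toReal_le_of_le_ofReal (by positivity) hs2
      _ ≤ C₀ * Cs * 3^(n-1) * r^(n-1) := by
          have h2 : (r+2)^(n-1) ≤ 3^(n-1) * r^(n-1) := by
            calc (r+2)^(n-1) ≤ (3*r)^(n-1) := pow_le_pow_left₀ (by linarith) (by linarith) _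
              _ = 3^(n-1) * r^(n-1) := mul_pow 3 r (n-1)
          have h2' : Cs * (r+2)^(n-1) ≤ Cs * (3^(n-1) * r^(n-1)) :=
            mul_le_mul_of_nonneg_left h2 hCs0
          calc Cs * (r+2)^(n-1) * C₀ ≤ Cs * (3^(n-1) * r^(n-1)) * C₀ :=
                mul_le_mul_of_nonneg_right h2' hC₀0.le
            _ = C₀ * Cs * 3^(n-1) * r^(n-1) := by ring
  -- the energy of v
  have hEv : energyE n hn0 p F G Ω (fun x => u x + φ x) ≤ B₀ * r^(n-1) := by
    rw [energyE, hB₀]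
    have : (fun x => u x + φ x) = v := rfl
    rw [this]
    calc (∫ x in Ω ∩ upperHalfSpace n hn0, (‖fderiv ℝ v x‖ ^ p + F (v x))) +
        (∫ x in Ω ∩ bottomHyperplane n hn0, G (v x) ∂(μH[(n - 1 : ℕ)]))
        ≤ M * (Ca * r^(n-1)) + C₀ * Cs * 3^(n-1) * r^(n-1) := add_le_add hterm1 hterm2
      _ = (M * Ca + C₀ * Cs * 3^(n-1)) * r^(n-1) := by ring
  -- combining: the measure of the intermediate set is small
  have hSsmall : volume S ≤ ENNReal.ofReal (K * r^(n-1)) := by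
    have hchain : δ * (volume S).toReal ≤ Q * (B₀ * r^(n-1)) := by
      calc δ * (volume S).toReal ≤ ∫ x in S, F (u x) := hstep1
        _ ≤ ∫ x in A, F (u x) := hstep2
        _ ≤ ∫ x in A, gu x := hstep3
        _ ≤ energyE n hn0 p F G Ω u := hstep4
        _ ≤ Q * energyE n hn0 p F G Ω (fun x => u x + φ x) := hE
        _ ≤ Q * (B₀ * r^(n-1)) := mul_le_mul_of_nonneg_left hEv (by linarith)
    have hfin : volume S ≠ ⊤ :=
      ((measure_mono (inter_subset_left.trans inter_subset_left)).trans_lt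
        measure_ball_lt_top).ne
    rw [← ENNReal.ofReal_toReal hfin]
    apply ENNReal.ofReal_le_ofReal
    rw [hK, div_mul_eq_mul_div, le_div_iff₀ hδ]
    calc (volume S).toReal * δ = δ * (volume S).toReal := mul_comm _ _
      _ ≤ Q * (B₀ * r^(n-1)) := hchain
      _ = Q * B₀ * r^(n-1) := by ring
  -- final decomposition
  have hsplit : ball x₀ r ∩ upperHalfSpace n hn0 ∩ {x | θ₀ < u x} ⊆
      (ball x₀ r ∩ upperHalfSpace n hn0 ∩ {x | θ < u x}) ∪ S := by
    rintro x ⟨⟨hb, hh⟩, hux⟩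
    by_cases h : θ < u x
    · exact Or.inl ⟨⟨hb, hh⟩, h⟩
    · refine Or.inr ⟨⟨ball_subset_ball (by linarith) hb, hh⟩, hux, not_lt.mp h⟩
  have h1 := hdens r hr₀r
  have h2 : ENNReal.ofReal (c * r ^ n) ≤
      volume (ball x₀ r ∩ upperHalfSpace n hn0 ∩ {x | θ < u x}) + ENNReal.ofReal (K * r^(n-1)) := by
    calc ENNReal.ofReal (c * r ^ n)
        ≤ volume (ball x₀ r ∩ upperHalfSpace n hn0 ∩ {x | θ₀ < u x}) := h1
      _ ≤ volume ((ball x₀ r ∩ upperHalfSpace n hn0 ∩ {x | θ < u x}) ∪ S) := measure_mono hsplit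
      _ ≤ volume (ball x₀ r ∩ upperHalfSpace n hn0 ∩ {x | θ < u x}) + volume S :=
          measure_union_le _ _
      _ ≤ _ := add_le_add le_rfl hSsmall
  have h3 : ENNReal.ofReal (c * r ^ n) - ENNReal.ofReal (K * r^(n-1)) ≤
      volume (ball x₀ r ∩ upperHalfSpace n hn0 ∩ {x | θ < u x}) :=
    tsub_le_iff_right.mpr h2
  refine le_trans ?_ h3
  rw [← ENNReal.ofReal_sub _ (by positivity)]
  apply ENNReal.ofReal_le_ofReal
  have hnn : n - 1 + 1 = n := by omega
  have hpow : r ^ n = r^(n-1) * r := by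
    conv_lhs => rw [← hnn]
    rw [pow_succ]
  have hKr : K ≤ c/2 * r := by
    rw [div_mul_eq_mul_div, le_div_iff₀ (by norm_num : (0:ℝ) < 2)]
    have : 2*K/c ≤ r - 1 := by linarith
    rw [div_le_iff₀ hc] at this
    nlinarith
  have := mul_le_mul_of_nonneg_right hKr (pow_nonneg hr0'.le (n-1))
  nlinarith [pow_nonneg hr0'.le (n-1), pow_nonneg hr0'.le n]
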